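/- Let p be a polynomial over ℂ of degree n ≥ 2, let z₀ be a simple root of p (i.e. p(z₀) = 0 and p′(z₀) ≠ 0), and let d be the minimal distance from z₀ to the other roots of p, i.e. d = min{|z − z₀| : p(z) = 0, z ≠ z₀}. Then for every starting point w₀ with |w₀ − z₀| < d/(2n − 1), the Newton iteration w_{k+1} = w_k − p(w_k)/p′(w_k) is well defined for all k (i.e. p′(w_k) ≠ 0 for every k) and the sequence (w_k) converges to z₀. -/

import Mathlib

open Polynomial Filter

lemma newton_aux_deriv (t : Multiset ℂ) (w : ℂ) (hw : ∀ z ∈ t, w ≠ z) :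
    (Polynomial.derivative (t.map fun z => X - C z).prod).eval w
      = ((t.map fun z => X - C z).prod).eval w * (t.map fun z => (w - z)⁻¹).sum := by
  induction t using Multiset.induction_on with
  | empty => simp
  | cons z t ih =>
    have hz : w - z ≠ 0 := sub_ne_zero.mpr (hw z (Multiset.mem_cons_self _ _))
    have ih' := ih (fun y hy => hw y (Multiset.mem_cons_of_mem hy))
    simp only [Multiset.map_cons, Multiset.prod_cons, derivative_mul, derivative_X_sub_C,
      one_mul, eval_add, eval_mul, eval_sub, eval_X, eval_C, Multiset.sum_cons, ih']
    field_simp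

lemma newton_aux_abs_sum (t : Multiset ℂ) (f : ℂ → ℂ) :
    ‖(t.map f).sum‖ ≤ (t.map fun z => ‖f z‖).sum := by
  induction t using Multiset.induction_on with
  | empty => simp
  | cons z t ih =>
    simp only [Multiset.map_cons, Multiset.sum_cons]
    exact le_trans (norm_add_le _ _) (by linarith)

theorem newton_method_convergence_radius
    (p : Polynomial ℂ) (hdeg : 2 ≤ p.natDegree)
    (z₀ : ℂ) (hroot : p.eval z₀ = 0) (hsimple : p.derivative.eval z₀ ≠ 0)
    (d : ℝ)
    (hd : IsLeast {r : ℝ | ∃ z : ℂ, p.eval z = 0 ∧ z ≠ z₀ ∧ r = ‖z - z₀‖} d)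
    (w₀ : ℂ) (hw₀ : ‖w₀ - z₀‖ < d / (2 * (p.natDegree : ℝ) - 1))
    (w : ℕ → ℂ) (hw0 : w 0 = w₀)
    (hwrec : ∀ k, w (k + 1) = w k - p.eval (w k) / p.derivative.eval (w k)) :
    (∀ k, p.derivative.eval (w k) ≠ 0) ∧ Tendsto w atTop (nhds z₀) := by
  classical
  have hp0 : p ≠ 0 := fun h => by simp [h] at hdeg
  set n := p.natDegree with hn
  obtain ⟨⟨z₁, hz₁, hz₁ne, hz₁d⟩, hlb⟩ := hd
  have hd0 : 0 < d := by
    rw [hz₁d]; exact norm_pos_iff.mpr (sub_ne_zero.mpr hz₁ne)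
  set t := p.roots with ht
  have hcard : Multiset.card t = n := (splits_iff_card_roots.mp (IsAlgClosed.splits p))
  have hz₀t : z₀ ∈ t := (mem_roots hp0).mpr hroot
  have hcount : t.count z₀ = 1 := by
    rw [ht, count_roots]
    have h1 : 0 < p.rootMultiplicity z₀ := (rootMultiplicity_pos hp0).mpr hroot
    have h2 : ¬ 1 < p.rootMultiplicity z₀ := by
      rw [one_lt_rootMultiplicity_iff_isRoot hp0]
      exact fun h => hsimple h.2
    omega
  set s := t.erase z₀ with hs
  have hts : t = z₀ ::ₘ s := (Multiset.cons_erase hz₀t).symm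
  have hscard : Multiset.card s = n - 1 := by
    rw [hs, Multiset.card_erase_of_mem hz₀t, hcard, Nat.pred_eq_sub_one]
  have hz₀s : z₀ ∉ s := by
    rw [← Multiset.count_eq_zero, hs, Multiset.count_erase_self, hcount]
  have hsd : ∀ z ∈ s, d ≤ ‖z - z₀‖ := by
    intro z hz
    refine hlb ⟨z, ?_, ?_, rfl⟩
    · exact (mem_roots hp0).mp (Multiset.mem_of_mem_erase hz)
    · exact fun h => hz₀s (h ▸ hz)
  have hfac : p = C p.leadingCoeff * (t.map fun z => X - C z).prod :=
    (IsAlgClosed.splits p).eq_prod_roots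
  have hc0 : p.leadingCoeff ≠ 0 := leadingCoeff_ne_zero.mpr hp0
  -- real constants
  set r₀ := ‖w₀ - z₀‖ with hr₀
  have hr₀0 : 0 ≤ r₀ := norm_nonneg _
  have hnR : (2:ℝ) ≤ (n : ℝ) := by exact_mod_cast hdeg
  have hden : (0:ℝ) < 2 * (n:ℝ) - 1 := by linarith
  have hr₀d : r₀ < d := lt_of_lt_of_le hw₀ (by
    rw [div_le_iff₀ hden]; nlinarith)
  have hdr : (0:ℝ) < d - r₀ := by linarith
  set q := r₀ * ((n:ℝ) - 1) / (d - r₀) with hq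
  have hq0 : 0 ≤ q := div_nonneg (by nlinarith) hdr.le
  have hqhalf : q < 1/2 := by
    rw [hq, div_lt_iff₀ hdr]
    have : r₀ * (2 * (n:ℝ) - 1) < d := (lt_div_iff₀ hden).mp hw₀
    nlinarith
  set K := q / (1 - q) with hK
  have hK0 : 0 ≤ K := div_nonneg hq0 (by linarith)
  have hK1 : K < 1 := by
    rw [hK, div_lt_one (by linarith)]; linarith
  -- key step
  have key : ∀ v : ℂ, ‖v - z₀‖ ≤ r₀ →
      p.derivative.eval v ≠ 0 ∧
      ‖(v - p.eval v / p.derivative.eval v) - z₀‖ ≤ K * ‖v - z₀‖ := by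
    intro v hv
    by_cases hv0 : v = z₀
    · subst hv0
      refine ⟨hsimple, ?_⟩
      simp [hroot]
    · have hu : v - z₀ ≠ 0 := sub_ne_zero.mpr hv0
      set r := ‖v - z₀‖ with hr
      have hr0 : 0 < r := norm_pos_iff.mpr hu
      have hvz : ∀ z ∈ s, v ≠ z := by
        intro z hz he
        have h1 : d ≤ ‖z - z₀‖ := hsd z hz
        rw [← he] at h1
        linarith
      have hvt : ∀ z ∈ t, v ≠ z := by
        intro z hz
        rw [hts] at hz
        rcases Multiset.mem_cons.mp hz with h | h
        · exact h ▸ hv0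
        · exact hvz z h
      have hpv : p.eval v ≠ 0 := fun h => hvt v ((mem_roots hp0).mpr h) rfl
      set S := ((s.map fun z => (v - z)⁻¹).sum) with hS
      have hp' : p.derivative.eval v = p.eval v * ((v - z₀)⁻¹ + S) := by
        have h1 : p.derivative = C p.leadingCoeff * Polynomial.derivative ((t.map fun z => X - C z).prod) := by
          conv_lhs => rw [hfac]
          rw [derivative_mul, derivative_C, zero_mul, zero_add]
        have hsum : (t.map fun z => (v - z)⁻¹).sum = (v - z₀)⁻¹ + S := by
          rw [hts, Multiset.map_cons, Multiset.sum_cons]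
        rw [h1, eval_mul, eval_C, newton_aux_deriv t v hvt, hsum]
        conv_rhs => rw [hfac]
        rw [eval_mul, eval_C]
        ring
      have hSb : ‖S‖ ≤ ((n:ℝ) - 1) / (d - r₀) := by
        have hmem : ∀ x ∈ s.map fun z => ‖(v - z)⁻¹‖, x ≤ (d - r₀)⁻¹ := by
          intro x hx
          obtain ⟨z, hz, rfl⟩ := Multiset.mem_map.mp hx
          rw [norm_inv]
          have h1 : d - r₀ ≤ ‖v - z‖ := by
            have h2 : d ≤ ‖z - z₀‖ := hsd z hz
            have h3 : ‖z - z₀‖ ≤ ‖z - v‖ + ‖v - z₀‖ := by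
              simpa using norm_add_le (z - v) (v - z₀)
            rw [norm_sub_rev v z]
            linarith
          exact inv_anti₀ hdr h1
        calc ‖S‖ ≤ (s.map fun z => ‖(v - z)⁻¹‖).sum :=
              newton_aux_abs_sum s _
          _ ≤ Multiset.card (s.map fun z => ‖(v - z)⁻¹‖) • ((d - r₀)⁻¹) :=
              Multiset.sum_le_card_nsmul _ _ hmem
          _ = ((n:ℝ) - 1) / (d - r₀) := by
              rw [Multiset.card_map, hscard, nsmul_eq_mul, Nat.cast_sub (by omega : 1 ≤ n)]
              push_cast
              rw [div_eq_mul_inv]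
      set a := (v - z₀) * S with ha
      have habs_a : ‖a‖ ≤ q := by
        rw [ha, norm_mul]
        calc ‖v - z₀‖ * ‖S‖ ≤ r₀ * (((n:ℝ) - 1) / (d - r₀)) := by
              apply mul_le_mul hv hSb (norm_nonneg _) hr₀0
          _ = q := by rw [hq]; ring
      have h1a : 1 - q ≤ ‖1 + a‖ := by
        have h := norm_add_le (1 + a) (-a)
        rw [add_neg_cancel_right, norm_one, norm_neg] at h
        linarith
      have h1a0 : (1 : ℂ) + a ≠ 0 := by
        intro h
        rw [h] at h1a
        simp at h1a
        linarith
      have hStot : (v - z₀)⁻¹ + S = (1 + a) / (v - z₀) := by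
        rw [ha]
        field_simp
      have hp'0 : p.derivative.eval v ≠ 0 := by
        rw [hp', hStot]
        exact mul_ne_zero hpv (div_ne_zero h1a0 hu)
      refine ⟨hp'0, ?_⟩
      have hNform : v - p.eval v / p.derivative.eval v - z₀ = (v - z₀) * a / (1 + a) := by
        rw [hp', hStot]
        field_simp
        ring
      rw [hNform, norm_div, norm_mul]
      have h1apos : (0:ℝ) < ‖1 + a‖ := norm_pos_iff.mpr h1a0
      rw [div_le_iff₀ h1apos]
      have hKq : K * (1 - q) = q := by
        rw [hK, div_mul_cancel₀ _ (ne_of_gt (by linarith : (0:ℝ) < 1 - q))]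
      rw [← hr]
      have e1 : r * ‖a‖ ≤ r * q := mul_le_mul_of_nonneg_left habs_a hr0.le
      have e2 : K * r * (1 - q) ≤ K * r * ‖1 + a‖ :=
        mul_le_mul_of_nonneg_left h1a (mul_nonneg hK0 hr0.le)
      have e3 : K * r * (1 - q) = q * r := by
        rw [mul_comm K r, mul_assoc, hKq, mul_comm]
      linarith
  -- iteration
  have hiter : ∀ k, ‖w k - z₀‖ ≤ K ^ k * r₀ := by
    intro k
    induction k with
    | zero => simp [hw0, hr₀]
    | succ k ih =>
      have hle : ‖w k - z₀‖ ≤ r₀ :=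
        le_trans ih (by
          calc K ^ k * r₀ ≤ 1 * r₀ :=
                mul_le_mul_of_nonneg_right (pow_le_one₀ hK0 hK1.le) hr₀0
            _ = r₀ := one_mul r₀)
      have := (key (w k) hle).2
      rw [← hwrec k] at this
      calc ‖w (k+1) - z₀‖ ≤ K * ‖w k - z₀‖ := this
        _ ≤ K * (K ^ k * r₀) := mul_le_mul_of_nonneg_left ih hK0
        _ = K ^ (k+1) * r₀ := by ring
  have hle' : ∀ k, ‖w k - z₀‖ ≤ r₀ := fun k =>
    le_trans (hiter k) (by
      calc K ^ k * r₀ ≤ 1 * r₀ :=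
            mul_le_mul_of_nonneg_right (pow_le_one₀ hK0 hK1.le) hr₀0
        _ = r₀ := one_mul r₀)
  refine ⟨fun k => (key (w k) (hle' k)).1, ?_⟩
  rw [tendsto_iff_dist_tendsto_zero]
  have hgeo : Tendsto (fun k : ℕ => K ^ k * r₀) atTop (nhds 0) := by
    have := (tendsto_pow_atTop_nhds_zero_of_lt_one hK0 hK1).mul_const r₀
    simpa using this
  refine squeeze_zero (fun k => dist_nonneg) (fun k => ?_) hgeo
  rw [Complex.dist_eq]
  exact hiter k
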